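/- For all real x ≥ 1, the function 𝓗(x) := x·H(1/x) satisfies 𝓗(x) ≤ 2·sqrt(x-1), where H is the binary entropy function. -/

import Mathlib

noncomputable def binH (p : ℝ) : ℝ := -p * Real.logb 2 p - (1 - p) * Real.logb 2 (1 - p)

open Real Set

noncomputable def Fn (x : ℝ) : ℝ :=
  2 * Real.log 2 * Real.sqrt (x - 1) - x * Real.log x + (x - 1) * Real.log (x - 1)

noncomputable def Ht (x : ℝ) : ℝ := Real.sqrt (x - 1) * (Real.log x - Real.log (x - 1))

noncomputable def Kf (x : ℝ) : ℝ := Real.log x - Real.log (x - 1) - 2 / x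

lemma log_le_half {u : ℝ} (hu : 1 ≤ u) : Real.log u ≤ (u - 1/u) / 2 := by
  have key : MonotoneOn (fun t : ℝ => (t - t⁻¹)/2 - Real.log t) (Ici 1) := by
    apply monotoneOn_of_hasDerivWithinAt_nonneg (convex_Ici 1)
      (f' := fun t => (1 - -(t^2)⁻¹)/2 - t⁻¹)
    · intro t ht
      have ht1 : (1:ℝ) ≤ t := ht
      have ht0 : t ≠ 0 := by intro h; rw [h] at ht1; norm_num at ht1
      exact (((continuousAt_id.sub (continuousAt_id.inv₀ ht0)).div_const 2).sub
        (Real.continuousAt_log ht0)).continuousWithinAt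
    · intro t ht
      rw [interior_Ici] at ht
      have ht0 : t ≠ 0 := by intro h; rw [h] at ht; norm_num at ht
      exact ((((hasDerivAt_id t).sub (hasDerivAt_inv ht0)).div_const 2).sub
        (Real.hasDerivAt_log ht0)).hasDerivWithinAt
    · intro t ht
      rw [interior_Ici] at ht
      have ht1 : (1:ℝ) < t := ht
      have ht0 : (0:ℝ) < t := by linarith
      have he : (1 - -(t^2)⁻¹)/2 - t⁻¹ = (t-1)^2/(2*t^2) := by
        field_simp
        ring
      rw [he]
      positivity
  have := key Set.self_mem_Ici (Set.mem_Ici.2 hu) hu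
  simp only [Real.log_one] at this
  norm_num at this
  rw [one_div]
  linarith

lemma Kf_nonpos {x : ℝ} (hx : 3/2 ≤ x) : Kf x ≤ 0 := by
  have hx1 : (1:ℝ) < x := by linarith
  have h0 : (0:ℝ) < x := by linarith
  have h1 : (0:ℝ) < x - 1 := by linarith
  have hu : (1:ℝ) ≤ x/(x-1) := by
    rw [le_div_iff₀ h1]; linarith
  have hlog : Real.log x - Real.log (x-1) = Real.log (x/(x-1)) := by
    rw [Real.log_div (by linarith) (by linarith)]
  have hL := log_le_half hu
  have he : (x/(x-1) - 1/(x/(x-1)))/2 - 2/x = (3 - 2*x)/(2*x*(x-1)) := by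
    rw [one_div_div]
    field_simp
    ring
  have hnum : (3 - 2*x)/(2*x*(x-1)) ≤ 0 := by
    apply div_nonpos_of_nonpos_of_nonneg
    · linarith
    · nlinarith
  unfold Kf
  rw [hlog]
  linarith

lemma contAt_log_sub_one {z : ℝ} (h1 : z - 1 ≠ 0) :
    ContinuousAt (fun x : ℝ => Real.log (x - 1)) z := by
  have hc1 : ContinuousAt (fun x : ℝ => x - 1) z := continuousAt_id.sub continuousAt_const
  have h := ContinuousAt.comp (g := Real.log) (f := fun x : ℝ => x - 1) (x := z)
    (Real.continuousAt_log h1) hc1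
  exact h

lemma Kf_cont {z : ℝ} (hz : 1 < z) : ContinuousAt Kf z := by
  have h0 : z ≠ 0 := by linarith
  have h1 : z - 1 ≠ 0 := sub_ne_zero.2 hz.ne'
  unfold Kf
  apply ContinuousAt.sub
  apply ContinuousAt.sub
  · exact Real.continuousAt_log h0
  · exact contAt_log_sub_one h1
  · exact continuousAt_const.div continuousAt_id h0

lemma hasDerivAt_Kf {x : ℝ} (hx : 1 < x) :
    HasDerivAt Kf (x⁻¹ - (x-1)⁻¹ + 2*(x^2)⁻¹) x := by
  have h0 : x ≠ 0 := by linarith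
  have h1 : x - 1 ≠ 0 := sub_ne_zero.2 hx.ne'
  have hlogx := Real.hasDerivAt_log h0
  have hlogx1 : HasDerivAt (fun t : ℝ => Real.log (t-1)) (x-1)⁻¹ x := by
    have := (Real.hasDerivAt_log h1).comp x ((hasDerivAt_id x).sub_const 1)
    simpa [Function.comp_def] using this
  have hdiv : HasDerivAt (fun t : ℝ => 2/t) (2 * -(x^2)⁻¹) x := by
    have := (hasDerivAt_inv h0).const_mul (2:ℝ)
    simpa [div_eq_mul_inv] using this
  have := (hlogx.sub hlogx1).sub hdiv
  exact this.congr_deriv (by ring)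

lemma Kf_anti : AntitoneOn Kf (Ioc 1 2) := by
  apply antitoneOn_of_hasDerivWithinAt_nonpos (convex_Ioc 1 2)
    (f' := fun x => x⁻¹ - (x-1)⁻¹ + 2*(x^2)⁻¹)
  · intro z hz
    exact (Kf_cont hz.1).continuousWithinAt
  · intro z hz
    rw [interior_Ioc] at hz
    exact (hasDerivAt_Kf hz.1).hasDerivWithinAt
  · intro z hz
    rw [interior_Ioc] at hz
    obtain ⟨hz1, hz2⟩ := hz
    have h0 : (0:ℝ) < z := by linarith
    have h1 : (0:ℝ) < z - 1 := by linarith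
    have he : z⁻¹ - (z-1)⁻¹ + 2*(z^2)⁻¹ = (z - 2)/(z^2*(z-1)) := by
      field_simp
      ring
    rw [he]
    apply div_nonpos_of_nonpos_of_nonneg
    · linarith
    · positivity

lemma exists_c : ∃ c ∈ Icc (11/10:ℝ) (3/2), Kf c = 0 := by
  have hcont : ContinuousOn Kf (Icc (11/10:ℝ) (3/2)) := by
    intro t ht
    have : (1:ℝ) < t := lt_of_lt_of_le (by norm_num) ht.1
    exact (Kf_cont this).continuousWithinAt
  have hKb : Kf (3/2) ≤ 0 := Kf_nonpos (le_refl _)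
  have hKa : 0 ≤ Kf (11/10) := by
    unfold Kf
    have h1 : Real.log (11/10) - Real.log (11/10 - 1) = Real.log 11 := by
      rw [show (11/10:ℝ) - 1 = 1/10 by norm_num,
        ← Real.log_div (by norm_num) (by norm_num)]
      norm_num
    rw [h1]
    have h8 : Real.log 8 ≤ Real.log 11 := Real.log_le_log (by norm_num) (by norm_num)
    have h83 : Real.log 8 = 3 * Real.log 2 := by
      rw [show (8:ℝ) = 2^3 by norm_num, Real.log_pow]
      push_cast; ring
    have hl2 := Real.log_two_gt_d9
    rw [h83] at h8
    norm_num
    nlinarith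
  have hmem : (0:ℝ) ∈ Icc (Kf (3/2)) (Kf (11/10)) := ⟨hKb, hKa⟩
  have := intermediate_value_Icc' (by norm_num : (11/10:ℝ) ≤ 3/2) hcont hmem
  obtain ⟨c, hc, hc0⟩ := this
  exact ⟨c, hc, hc0⟩

lemma hasDerivAt_Ht {x : ℝ} (hx : 1 < x) :
    HasDerivAt Ht (Kf x / (2 * Real.sqrt (x-1))) x := by
  have h0 : x ≠ 0 := by linarith
  have h1' : (0:ℝ) < x - 1 := by linarith
  have h1 : x - 1 ≠ 0 := ne_of_gt h1'
  set S := Real.sqrt (x-1) with hS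
  have hSpos : 0 < S := Real.sqrt_pos.2 h1'
  have hS2 : S^2 = x - 1 := Real.sq_sqrt (le_of_lt h1')
  have hsq : HasDerivAt (fun t : ℝ => Real.sqrt (t-1)) (1/(2*S)) x := by
    have := (Real.hasDerivAt_sqrt h1).comp x ((hasDerivAt_id x).sub_const 1)
    simpa [Function.comp_def] using this
  have hlogx1 : HasDerivAt (fun t : ℝ => Real.log (t-1)) (x-1)⁻¹ x := by
    have := (Real.hasDerivAt_log h1).comp x ((hasDerivAt_id x).sub_const 1)
    simpa [Function.comp_def] using this
  have hlg : HasDerivAt (fun t : ℝ => Real.log t - Real.log (t-1)) (x⁻¹ - (x-1)⁻¹) x :=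
    (Real.hasDerivAt_log h0).sub hlogx1
  have hp := hsq.mul hlg
  have e2 : S * (x⁻¹ - (x-1)⁻¹) = -(1/(x*S)) := by
    have hstep : (x:ℝ)⁻¹ - (x-1)⁻¹ = -(1/(x*(x-1))) := by
      field_simp
      ring
    rw [hstep, ← hS2]
    field_simp
  have e : Kf x / (2*S) = (Real.log x - Real.log (x-1))/(2*S) - 1/(x*S) := by
    unfold Kf
    field_simp
  have he : 1/(2*S) * (Real.log x - Real.log (x-1)) + S * (x⁻¹ - (x-1)⁻¹)
      = Kf x / (2 * S) := by
    rw [e2, e]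
    ring
  rw [← he]
  exact hp

lemma Ht_cont {z : ℝ} (hz : 1 < z) : ContinuousAt Ht z := by
  have h0 : z ≠ 0 := by linarith
  have h1 : z - 1 ≠ 0 := sub_ne_zero.2 hz.ne'
  unfold Ht
  apply ContinuousAt.mul
  · exact (Real.continuous_sqrt.comp (continuous_id.sub continuous_const)).continuousAt
  · exact (Real.continuousAt_log h0).sub (contAt_log_sub_one h1)

lemma hasDerivAt_Fn {x : ℝ} (hx : 1 < x) :
    HasDerivAt Fn ((Real.log 2 - Ht x) / Real.sqrt (x-1)) x := by
  have h0 : x ≠ 0 := by linarith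
  have h1' : (0:ℝ) < x - 1 := by linarith
  have h1 : x - 1 ≠ 0 := ne_of_gt h1'
  set S := Real.sqrt (x-1) with hS
  have hSpos : 0 < S := Real.sqrt_pos.2 h1'
  have hsq : HasDerivAt (fun t : ℝ => Real.sqrt (t-1)) (1/(2*S)) x := by
    have := (Real.hasDerivAt_sqrt h1).comp x ((hasDerivAt_id x).sub_const 1)
    simpa [Function.comp_def] using this
  have hml : HasDerivAt (fun t : ℝ => t * Real.log t) (Real.log x + 1) x :=
    Real.hasDerivAt_mul_log h0
  have hml1 : HasDerivAt (fun t : ℝ => (t-1) * Real.log (t-1)) (Real.log (x-1) + 1) x := by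
    have := (Real.hasDerivAt_mul_log h1).comp x ((hasDerivAt_id x).sub_const 1)
    simpa [Function.comp_def] using this
  have hp := ((hsq.const_mul (2 * Real.log 2)).sub hml).add hml1
  have he : 2 * Real.log 2 * (1/(2*S)) - (Real.log x + 1) + (Real.log (x-1) + 1)
      = (Real.log 2 - Ht x) / S := by
    unfold Ht
    rw [← hS]
    field_simp
    ring
  rw [← he]
  exact hp

lemma Fn_continuous : Continuous Fn := by
  unfold Fn
  have h1 : Continuous fun x : ℝ => (x-1) * Real.log (x-1) :=
    Real.continuous_mul_log.comp (continuous_id.sub continuous_const)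
  exact ((continuous_const.mul
    (Real.continuous_sqrt.comp (continuous_id.sub continuous_const))).sub
    Real.continuous_mul_log).add h1

lemma Fn_one : Fn 1 = 0 := by
  simp [Fn]

lemma Fn_two : Fn 2 = 0 := by
  norm_num [Fn]

lemma Ht_two : Ht 2 = Real.log 2 := by
  norm_num [Ht]

lemma Fn_nonneg {x : ℝ} (hx : 1 ≤ x) : 0 ≤ Fn x := by
  obtain ⟨c, hc, hc0⟩ := exists_c
  have hc1 : (1:ℝ) < c := lt_of_lt_of_le (by norm_num) hc.1
  have hc32 : c ≤ 3/2 := hc.2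
  -- sign of Kf
  have hKpos : ∀ z ∈ Ioc (1:ℝ) c, 0 ≤ Kf z := by
    intro z hz
    rw [← hc0]
    exact Kf_anti ⟨hz.1, le_trans hz.2 (by linarith)⟩ ⟨hc1, by linarith⟩ hz.2
  have hKneg : ∀ z : ℝ, c ≤ z → Kf z ≤ 0 := by
    intro z hz
    rcases le_or_gt z 2 with h | h
    · rw [← hc0]
      exact Kf_anti ⟨hc1, by linarith⟩ ⟨by linarith, h⟩ hz
    · exact Kf_nonpos (by linarith)
  -- monotonicity of Ht
  have hHmono : MonotoneOn Ht (Ioc 1 c) := by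
    apply monotoneOn_of_hasDerivWithinAt_nonneg (convex_Ioc 1 c)
      (f' := fun z => Kf z / (2 * Real.sqrt (z-1)))
    · intro z hz; exact (Ht_cont hz.1).continuousWithinAt
    · intro z hz; rw [interior_Ioc] at hz
      exact (hasDerivAt_Ht hz.1).hasDerivWithinAt
    · intro z hz; rw [interior_Ioc] at hz
      have hS : 0 < Real.sqrt (z-1) := Real.sqrt_pos.2 (by linarith [hz.1])
      exact div_nonneg (hKpos z ⟨hz.1, le_of_lt hz.2⟩) (by positivity)
  have hHanti : AntitoneOn Ht (Ici c) := by
    apply antitoneOn_of_hasDerivWithinAt_nonpos (convex_Ici c)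
      (f' := fun z => Kf z / (2 * Real.sqrt (z-1)))
    · intro z hz; exact (Ht_cont (lt_of_lt_of_le hc1 hz)).continuousWithinAt
    · intro z hz; rw [interior_Ici] at hz
      exact (hasDerivAt_Ht (lt_trans hc1 hz)).hasDerivWithinAt
    · intro z hz; rw [interior_Ici] at hz
      have hS : 0 < Real.sqrt (z-1) := Real.sqrt_pos.2 (by linarith [lt_trans hc1 hz])
      exact div_nonpos_of_nonpos_of_nonneg (hKneg z (le_of_lt hz)) (by positivity)
  have h2c : (2:ℝ) ∈ Ici c := Set.mem_Ici.2 (by linarith)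
  have hH_ge : ∀ z, c ≤ z → z ≤ 2 → Real.log 2 ≤ Ht z := by
    intro z hzc hz2
    rw [← Ht_two]
    exact hHanti hzc h2c hz2
  have hH_le2 : ∀ z, 2 ≤ z → Ht z ≤ Real.log 2 := by
    intro z hz
    rw [← Ht_two]
    exact hHanti h2c (Set.mem_Ici.2 (by linarith)) hz
  -- case analysis on x
  rcases eq_or_lt_of_le hx with h | hx1
  · rw [← h, Fn_one]
  rcases le_or_gt 2 x with hx2 | hx2
  · -- x ≥ 2: Fn monotone on [2, x]
    have hmono : MonotoneOn Fn (Icc 2 x) := by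
      apply monotoneOn_of_hasDerivWithinAt_nonneg (convex_Icc 2 x)
        (f' := fun z => (Real.log 2 - Ht z) / Real.sqrt (z-1))
        Fn_continuous.continuousOn
      · intro z hz; rw [interior_Icc] at hz
        exact (hasDerivAt_Fn (by linarith [hz.1])).hasDerivWithinAt
      · intro z hz; rw [interior_Icc] at hz
        apply div_nonneg
        · linarith [hH_le2 z (le_of_lt hz.1)]
        · positivity
    have := hmono ⟨le_refl 2, hx2⟩ ⟨hx2, le_refl x⟩ hx2
    rw [Fn_two] at this
    exact this
  · -- 1 < x < 2
    -- helper: if log 2 ≤ Ht z for all z in (x, 2), then Fn antitone on [x,2]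
    have hanti_case : (∀ z, x < z → z < 2 → Real.log 2 ≤ Ht z) → 0 ≤ Fn x := by
      intro hyp
      have hanti : AntitoneOn Fn (Icc x 2) := by
        apply antitoneOn_of_hasDerivWithinAt_nonpos (convex_Icc x 2)
          (f' := fun z => (Real.log 2 - Ht z) / Real.sqrt (z-1))
          Fn_continuous.continuousOn
        · intro z hz; rw [interior_Icc] at hz
          exact (hasDerivAt_Fn (lt_trans hx1 hz.1)).hasDerivWithinAt
        · intro z hz; rw [interior_Icc] at hz
          apply div_nonpos_of_nonpos_of_nonneg
          · linarith [hyp z hz.1 hz.2]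
          · positivity
      have := hanti ⟨le_refl x, le_of_lt hx2⟩ ⟨le_of_lt hx2, le_refl 2⟩ (le_of_lt hx2)
      rw [Fn_two] at this
      exact this
    rcases le_or_gt c x with hcx | hxc
    · -- c ≤ x < 2 : Ht ≥ log 2 on (x,2)
      apply hanti_case
      intro z hz1 hz2
      exact hH_ge z (by linarith) (le_of_lt hz2)
    · -- x < c
      rcases le_or_gt (Ht x) (Real.log 2) with hH | hH
      · -- Fn monotone on [1, x]
        have hmono : MonotoneOn Fn (Icc 1 x) := by
          apply monotoneOn_of_hasDerivWithinAt_nonneg (convex_Icc 1 x)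
            (f' := fun z => (Real.log 2 - Ht z) / Real.sqrt (z-1))
            Fn_continuous.continuousOn
          · intro z hz; rw [interior_Icc] at hz
            exact (hasDerivAt_Fn hz.1).hasDerivWithinAt
          · intro z hz; rw [interior_Icc] at hz
            apply div_nonneg
            · have hzx : Ht z ≤ Ht x :=
                hHmono ⟨hz.1, by linarith [hz.2]⟩ ⟨hx1, le_of_lt hxc⟩ (le_of_lt hz.2)
              linarith
            · positivity
        have := hmono ⟨le_refl 1, hx⟩ ⟨hx, le_refl x⟩ hx
        rw [Fn_one] at this
        exact this
      · -- Ht x > log 2 : Fn antitone on [x,2]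
        apply hanti_case
        intro z hz1 hz2
        rcases le_or_gt z c with hzc | hzc
        · have := hHmono ⟨hx1, le_of_lt hxc⟩ ⟨by linarith, hzc⟩ (le_of_lt hz1)
          linarith
        · exact hH_ge z (le_of_lt hzc) (le_of_lt hz2)

theorem stmt_3 (x : ℝ) (hx : 1 ≤ x) :
    x * binH (1 / x) ≤ 2 * Real.sqrt (x - 1) := by
  have hlog2 : (0:ℝ) < Real.log 2 := Real.log_pos (by norm_num)
  rcases eq_or_lt_of_le hx with h | hx1
  · rw [← h]
    norm_num [binH]
  · have h0 : (0:ℝ) < x := by linarith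
    have h1 : (0:ℝ) < x - 1 := by linarith
    have hb : x * binH (1/x) = (x * Real.log x - (x-1) * Real.log (x-1)) / Real.log 2 := by
      unfold binH
      rw [show (1:ℝ) - 1/x = (x-1)/x by field_simp]
      rw [Real.logb, Real.logb, Real.log_div (ne_of_gt h1) (ne_of_gt h0),
        Real.log_div one_ne_zero (ne_of_gt h0), Real.log_one]
      field_simp
      ring
    rw [hb, div_le_iff₀ hlog2]
    have h := Fn_nonneg hx
    unfold Fn at h
    linarith
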